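/- Let β = log 3 / log 4. For all nonnegative reals i₁, i₂, j₁, j₂: ((i₁+i₂)(j₁+j₂))^β ≤ (i₁j₁)^β + (i₂j₂)^β + max((i₁j₂)^β, (i₂j₁)^β). -/

import Mathlib

open Real Set

lemma log43_bounds : Real.log (4/3) ∈ Set.Icc (0.287680 : ℝ) 0.287684 := by
  have habs : |(1/4 : ℝ)| = 1/4 := by rw [abs_of_pos]; norm_num
  have h := Real.abs_log_sub_add_sum_range_le (x := (1/4 : ℝ)) (by rw [habs]; norm_num) 9
  have h2 : Real.log (1 - (1/4:ℝ)) = - Real.log (4/3) := by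
    rw [show (1 - (1/4:ℝ)) = (4/3)⁻¹ by norm_num, Real.log_inv]
  rw [h2, habs, abs_le] at h
  simp only [Finset.sum_range_succ, Finset.sum_range_zero] at h
  norm_num at h
  constructor <;> norm_num <;> linarith [h.1, h.2]

lemma log3_bounds : Real.log 3 ∈ Set.Icc (1.09860 : ℝ) 1.098615 := by
  have h43 := log43_bounds
  have h2l := Real.log_two_gt_d9
  have h2u := Real.log_two_lt_d9
  have key : Real.log 3 = 2 * Real.log 2 - Real.log (4/3) := by
    have : Real.log (4/3) = Real.log 4 - Real.log 3 := Real.log_div (by norm_num) (by norm_num)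
    have h4 : Real.log 4 = 2 * Real.log 2 := by
      rw [show (4:ℝ) = 2^2 by norm_num, Real.log_pow]; push_cast; ring
    rw [this, h4]; ring
  rw [key]
  obtain ⟨ha, hb⟩ := h43
  constructor <;> norm_num <;> linarith

noncomputable def PP : ℝ := Real.log 3 / Real.log 2
noncomputable def RR : ℝ := Real.log 4 / Real.log 3

lemma log4_eq : Real.log 4 = 2 * Real.log 2 := by
  rw [show (4:ℝ) = 2^2 by norm_num, Real.log_pow]; push_cast; ring

lemma log2_pos' : (0:ℝ) < Real.log 2 := Real.log_pos (by norm_num)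
lemma log3_pos' : (0:ℝ) < Real.log 3 := Real.log_pos (by norm_num)

lemma PP_lb : (1.5849:ℝ) ≤ PP := by
  have h2u := Real.log_two_lt_d9
  have h3l : (1.09860:ℝ) ≤ Real.log 3 := log3_bounds.1
  rw [PP, le_div_iff₀ log2_pos']
  nlinarith
lemma PP_ub : PP ≤ (1.585:ℝ) := by
  have h2l := Real.log_two_gt_d9
  have h3u : Real.log 3 ≤ (1.098615:ℝ) := log3_bounds.2
  rw [PP, div_le_iff₀ log2_pos']
  nlinarith
lemma PP_mul_RR : PP * RR = 2 := by
  rw [PP, RR, log4_eq]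
  field_simp
lemma PP_pos : (0:ℝ) < PP := by linarith [PP_lb]
lemma RR_eq : RR = 2 / PP := by
  have h := PP_mul_RR
  rw [eq_div_iff (ne_of_gt PP_pos)]
  linarith
lemma RR_lb : (1.26:ℝ) ≤ RR := by
  rw [RR_eq, le_div_iff₀ PP_pos]; nlinarith [PP_ub]
lemma RR_ub : RR ≤ (1.262:ℝ) := by
  rw [RR_eq, div_le_iff₀ PP_pos]; nlinarith [PP_lb]
lemma two_rpow_PP : (2:ℝ) ^ PP = 3 := by
  have h : (2:ℝ)^PP = Real.exp (Real.log 3) := by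
    rw [Real.rpow_def_of_pos (by norm_num), PP]
    congr 1
    field_simp
  rw [h, Real.exp_log (by norm_num : (0:ℝ) < 3)]
lemma beta_eq_PP : Real.log 3 / Real.log 4 = PP / 2 := by
  have h2 := ne_of_gt log2_pos'
  rw [PP, log4_eq, div_div]
  congr 1
  ring

lemma monoOn_of_hasDeriv {D : Set ℝ} (hD : Convex ℝ D) {f f' : ℝ → ℝ}
    (hd : ∀ x ∈ D, HasDerivAt f (f' x) x) (h0 : ∀ x ∈ interior D, 0 ≤ f' x) :
    MonotoneOn f D := by
  apply monotoneOn_of_deriv_nonneg hD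
  · exact fun x hx => (hd x hx).continuousAt.continuousWithinAt
  · exact fun x hx => ((hd x (interior_subset hx)).differentiableAt).differentiableWithinAt
  · intro x hx; rw [(hd x (interior_subset hx)).deriv]; exact h0 x hx

lemma antiOn_of_hasDeriv {D : Set ℝ} (hD : Convex ℝ D) {f f' : ℝ → ℝ}
    (hd : ∀ x ∈ D, HasDerivAt f (f' x) x) (h0 : ∀ x ∈ interior D, f' x ≤ 0) :
    AntitoneOn f D := by
  apply antitoneOn_of_deriv_nonpos hD
  · exact fun x hx => (hd x hx).continuousAt.continuousWithinAt
  · exact fun x hx => ((hd x (interior_subset hx)).differentiableAt).differentiableWithinAt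
  · intro x hx; rw [(hd x (interior_subset hx)).deriv]; exact h0 x hx


lemma rpow_ratl_le {x y : ℝ} (m n : ℕ) (hn : (n:ℝ) ≠ 0) (hx : 0 ≤ x) (hy : 0 ≤ y)
    (h : x^m ≤ y^n) : x ^ ((m:ℝ)/n) ≤ y := by
  have h0 : 0 ≤ x ^ ((m:ℝ)/n) := Real.rpow_nonneg hx _
  have key : (x ^ ((m:ℝ)/n))^n = x^m := by
    rw [← Real.rpow_natCast (x ^ ((m:ℝ)/n)) n, ← Real.rpow_mul hx, div_mul_cancel₀ _ hn,
      Real.rpow_natCast]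
  have hnne : n ≠ 0 := Nat.cast_ne_zero.mp hn
  have := (pow_le_pow_iff_left₀ h0 hy hnne).mp (by rw [key]; exact h)
  exact this

lemma le_rpow_ratl {x y : ℝ} (m n : ℕ) (hn : (n:ℝ) ≠ 0) (hx : 0 ≤ x) (hy : 0 ≤ y)
    (h : y^n ≤ x^m) : y ≤ x ^ ((m:ℝ)/n) := by
  have h0 : 0 ≤ x ^ ((m:ℝ)/n) := Real.rpow_nonneg hx _
  have key : (x ^ ((m:ℝ)/n))^n = x^m := by
    rw [← Real.rpow_natCast (x ^ ((m:ℝ)/n)) n, ← Real.rpow_mul hx, div_mul_cancel₀ _ hn,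
      Real.rpow_natCast]
  have hnne : n ≠ 0 := Nat.cast_ne_zero.mp hn
  exact (pow_le_pow_iff_left₀ hy h0 hnne).mp (by rw [key]; exact h)


lemma lemC : ∀ u : ℝ, 0 ≤ u → (1+u)^PP ≤ 1 + PP*u + (PP*(PP-1)/2)*u^2 := by
  have hPl := PP_lb; have hPu := PP_ub
  set c : ℝ := PP*(PP-1)/2 with hc
  set f : ℝ → ℝ := fun u => 1 + PP*u + c*u^2 - (1+u)^PP with hf
  set f1 : ℝ → ℝ := fun u => PP + 2*c*u - PP * (1+u)^(PP-1) with hf1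
  set f2 : ℝ → ℝ := fun u => 2*c - PP * (PP-1) * (1+u)^(PP-1-1) with hf2
  have hd1 : ∀ x ∈ Ici (0:ℝ), HasDerivAt f (f1 x) x := by
    intro x hx
    have hxpos : (0:ℝ) < 1 + x := by simp at hx; linarith
    have hbase : HasDerivAt (fun u : ℝ => 1+u) 1 x := (hasDerivAt_id x).const_add 1
    have hr : HasDerivAt (fun u : ℝ => (1+u)^PP) (1 * PP * (1+x)^(PP-1)) x :=
      hbase.rpow_const (Or.inl (ne_of_gt hxpos))
    have hpoly : HasDerivAt (fun u : ℝ => 1 + PP*u + c*u^2) (PP + c*(2*x)) x := by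
      have h1 : HasDerivAt (fun u : ℝ => PP*u) (PP*1) x := (hasDerivAt_id x).const_mul PP
      have h2 : HasDerivAt (fun u : ℝ => u^2) (2*x) x := by
        simpa using hasDerivAt_pow 2 x
      exact ((h1.const_add 1).add (h2.const_mul c)).congr_deriv (by ring)
    have := hpoly.sub hr
    refine this.congr_deriv ?_
    simp only [hf1]; ring
  have hd2 : ∀ x ∈ Ici (0:ℝ), HasDerivAt f1 (f2 x) x := by
    intro x hx
    have hxpos : (0:ℝ) < 1 + x := by simp at hx; linarith
    have hbase : HasDerivAt (fun u : ℝ => 1+u) 1 x := (hasDerivAt_id x).const_add 1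
    have hr : HasDerivAt (fun u : ℝ => (1+u)^(PP-1)) (1 * (PP-1) * (1+x)^(PP-1-1)) x :=
      hbase.rpow_const (Or.inl (ne_of_gt hxpos))
    have h1 : HasDerivAt (fun u : ℝ => 2*c*u) (2*c) x := by
      simpa using (hasDerivAt_id x).const_mul (2*c)
    have := (h1.const_add PP).sub (hr.const_mul PP)
    refine this.congr_deriv ?_
    simp only [hf2]; ring
  have hf2nn : ∀ x ∈ interior (Ici (0:ℝ)), 0 ≤ f1 x := by
    intro x hx
    rw [interior_Ici] at hx
    have hxpos : (0:ℝ) < x := hx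
    -- f1 monotone on [0,∞), f1 0 = 0
    have hmono : MonotoneOn f1 (Ici (0:ℝ)) := by
      apply monoOn_of_hasDeriv (convex_Ici 0) hd2
      intro y hy
      rw [interior_Ici] at hy
      have hy0 : (0:ℝ) < y := hy
      have h1y : (1:ℝ) ≤ 1 + y := by linarith
      have hle1 : (1+y)^(PP-1-1) ≤ 1 :=
        Real.rpow_le_one_of_one_le_of_nonpos h1y (by linarith)
      have hppos : 0 ≤ PP * (PP-1) := by nlinarith
      simp only [hf2, hc]
      nlinarith [mul_le_mul_of_nonneg_left hle1 hppos]
    have h0 : f1 0 = 0 := by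
      simp [hf1, Real.one_rpow]
    have := hmono (self_mem_Ici) (le_of_lt hx : (0:ℝ) ≤ x) (le_of_lt hxpos)
    simp at this ⊢
    linarith [h0 ▸ this]
  have hmonof : MonotoneOn f (Ici (0:ℝ)) := monoOn_of_hasDeriv (convex_Ici 0) hd1 hf2nn
  intro u hu
  have h0 : f 0 = 0 := by simp [hf, Real.one_rpow]
  have := hmonof self_mem_Ici (hu : (0:ℝ) ≤ u) hu
  rw [h0] at this
  simp only [hf] at this
  linarith

-- AM-GM based derivative positivity, standalone:
lemma psi_deriv_nonneg {y : ℝ} (hy : 0 < y) :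
    1 ≤ PP*(RR-1)*y^(RR-1-1) + (PP*(PP-1)/2)*(2*RR-1)*y^(2*RR-1-1) := by
  have hPl := PP_lb; have hPu := PP_ub; have hRl := RR_lb; have hRu := RR_ub
  have hPR := PP_mul_RR
  have h1 : PP*(RR-1) = 2 - PP := by linear_combination hPR
  have h2 : (PP*(PP-1)/2)*(2*RR-1) = (PP-1)*((4-PP)/2) := by linear_combination (PP-1) * hPR
  have hw1 : (0:ℝ) ≤ 2 - PP := by linarith
  have hw2 : (0:ℝ) ≤ PP - 1 := by linarith
  have hp1 : (0:ℝ) ≤ y^(RR-1-1) := Real.rpow_nonneg hy.le _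
  have hp2 : (0:ℝ) ≤ ((4-PP)/2)*y^(2*RR-1-1) := by
    have := Real.rpow_nonneg hy.le (2*RR-1-1); nlinarith
  have hAM := Real.geom_mean_le_arith_mean2_weighted hw1 hw2 hp1 hp2 (by ring)
  have hgeo : (y^(RR-1-1))^(2-PP) * (((4-PP)/2)*y^(2*RR-1-1))^(PP-1)
      = ((4-PP)/2)^(PP-1) * y^((RR-1-1)*(2-PP) + (2*RR-1-1)*(PP-1)) := by
    rw [Real.mul_rpow (by linarith) (Real.rpow_nonneg hy.le _)]
    rw [← Real.rpow_mul hy.le, ← Real.rpow_mul hy.le, Real.rpow_add hy]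
    ring
  have hexp : (RR-1-1)*(2-PP) + (2*RR-1-1)*(PP-1) = 0 := by linear_combination hPR
  rw [hexp, Real.rpow_zero, mul_one] at hgeo
  have hone : (1:ℝ) ≤ ((4-PP)/2)^(PP-1) :=
    Real.one_le_rpow (by linarith) (by linarith)
  calc (1:ℝ) ≤ ((4-PP)/2)^(PP-1) := hone
    _ = (y^(RR-1-1))^(2-PP) * (((4-PP)/2)*y^(2*RR-1-1))^(PP-1) := hgeo.symm
    _ ≤ (2-PP) * y^(RR-1-1) + (PP-1) * (((4-PP)/2)*y^(2*RR-1-1)) := hAM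
    _ = PP*(RR-1)*y^(RR-1-1) + (PP*(PP-1)/2)*(2*RR-1)*y^(2*RR-1-1) := by
        rw [h1, h2]; ring

lemma psi_le {x : ℝ} (hx0 : 0 < x) (hx47 : x ≤ 0.47) :
    PP*x^(RR-1) + (PP*(PP-1)/2)*x^(2*RR-1) ≤ 0.98 + x := by
  have hPl := PP_lb; have hPu := PP_ub; have hRl := RR_lb; have hRu := RR_ub
  set c : ℝ := PP*(PP-1)/2 with hc
  set ψ : ℝ → ℝ := fun y => PP*y^(RR-1) + c*y^(2*RR-1) - y with hψ
  have hmono : MonotoneOn ψ (Icc x 0.47) := by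
    apply monoOn_of_hasDeriv (convex_Icc _ _)
      (f' := fun y => PP*((RR-1)*y^(RR-1-1)) + c*((2*RR-1)*y^(2*RR-1-1)) - 1)
    · intro y hy
      have hy0 : (0:ℝ) < y := lt_of_lt_of_le hx0 hy.1
      have d1 : HasDerivAt (fun u : ℝ => u^(RR-1)) ((RR-1)*y^(RR-1-1)) y :=
        Real.hasDerivAt_rpow_const (Or.inl (ne_of_gt hy0))
      have d2 : HasDerivAt (fun u : ℝ => u^(2*RR-1)) ((2*RR-1)*y^(2*RR-1-1)) y :=
        Real.hasDerivAt_rpow_const (Or.inl (ne_of_gt hy0))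
      exact ((d1.const_mul PP).add (d2.const_mul c)).sub (hasDerivAt_id y)
    · intro y hy
      rw [interior_Icc] at hy
      have hy0 : (0:ℝ) < y := lt_of_lt_of_le hx0 hy.1.le
      have := psi_deriv_nonneg hy0
      rw [hc]; nlinarith [this]
  have happ := hmono (left_mem_Icc.mpr hx47) (right_mem_Icc.mpr hx47) hx47
  have e47 : (0.47:ℝ) = 47/100 := by norm_num
  have h1 : (0.47:ℝ)^(RR-1) ≤ 0.8218 := by
    have ha : (0.47:ℝ)^(RR-1) ≤ (0.47:ℝ)^((13:ℝ)/50) :=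
      Real.rpow_le_rpow_of_exponent_ge (by norm_num) (by norm_num) (by linarith)
    refine le_trans ha ?_
    rw [e47]
    exact rpow_ratl_le 13 50 (by norm_num) (by norm_num) (by norm_num) (by norm_num)
  have h2 : (0.47:ℝ)^(2*RR-1) ≤ 0.3175 := by
    have ha : (0.47:ℝ)^(2*RR-1) ≤ (0.47:ℝ)^((38:ℝ)/25) :=
      Real.rpow_le_rpow_of_exponent_ge (by norm_num) (by norm_num) (by linarith)
    refine le_trans ha ?_
    rw [e47]
    exact rpow_ratl_le 38 25 (by norm_num) (by norm_num) (by norm_num) (by norm_num)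
  have hn1 : (0:ℝ) ≤ (0.47:ℝ)^(RR-1) := Real.rpow_nonneg (by norm_num) _
  have hn2 : (0:ℝ) ≤ (0.47:ℝ)^(2*RR-1) := Real.rpow_nonneg (by norm_num) _
  have hcub : c ≤ 0.46362 := by rw [hc]; nlinarith
  have hc0 : 0 ≤ c := by rw [hc]; nlinarith
  have b1 : PP * (0.47:ℝ)^(RR-1) ≤ 1.585*0.8218 :=
    mul_le_mul hPu h1 hn1 (by norm_num)
  have b2 : c * (0.47:ℝ)^(2*RR-1) ≤ 0.46362*0.3175 :=
    mul_le_mul hcub h2 hn2 (by norm_num)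
  have hval : ψ 0.47 ≤ 0.98 := by
    simp only [hψ]
    norm_num at b1 b2 ⊢
    linarith
  have : ψ x ≤ 0.98 := le_trans happ hval
  simp only [hψ, hc] at this
  linarith

lemma part1 {x : ℝ} (hx0 : 0 ≤ x) (hx47 : x ≤ 0.47) : (1+x^RR)^PP ≤ 1+x+x^2 := by
  have hRl := RR_lb
  rcases eq_or_lt_of_le hx0 with heq|hpos
  · rw [← heq, Real.zero_rpow (by linarith : RR ≠ 0)]
    norm_num
  · have hC := lemC (x^RR) (Real.rpow_nonneg hx0 _)
    have e1 : x^RR = x * x^(RR-1) := by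
      conv_lhs => rw [show RR = 1+(RR-1) by ring]
      rw [Real.rpow_add hpos, Real.rpow_one]
    have e2 : (x^RR)^2 = x * x^(2*RR-1) := by
      rw [sq, ← Real.rpow_add hpos]
      conv_lhs => rw [show RR+RR = 1+(2*RR-1) by ring]
      rw [Real.rpow_add hpos, Real.rpow_one]
    have hps := psi_le hpos hx47
    calc (1+x^RR)^PP ≤ 1 + PP*(x^RR) + (PP*(PP-1)/2)*(x^RR)^2 := hC
      _ = 1 + x*(PP*x^(RR-1) + (PP*(PP-1)/2)*x^(2*RR-1)) := by rw [e2, e1]; ring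
      _ ≤ 1 + x*(0.98+x) := by nlinarith [hps, hx0]
      _ ≤ 1 + x + x^2 := by nlinarith

-- numeric bound on N(3.6)
lemma NN_num : (RR-1)*(3.6:ℝ)^(PP-1) + (RR*(PP-1))*(3.6:ℝ)^(PP-2) ≤ 1 := by
  have hPl := PP_lb; have hPu := PP_ub; have hRl := RR_lb; have hRu := RR_ub
  have h36 : (3.6:ℝ) = 18/5 := by norm_num
  have ha : (3.6:ℝ)^(PP-1) ≤ 2.116 := by
    have h1 : (3.6:ℝ)^(PP-1) ≤ (3.6:ℝ)^((117:ℝ)/200) :=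
      Real.rpow_le_rpow_of_exponent_le (by norm_num) (by linarith)
    refine le_trans h1 ?_
    rw [h36]
    exact rpow_ratl_le 117 200 (by norm_num) (by norm_num) (by norm_num) (by norm_num)
  have hb : (3.6:ℝ)^(PP-2) ≤ 0.58778 := by
    have e : (3.6:ℝ)^(PP-2) = (3.6:ℝ)^(PP-1) / (3.6:ℝ)^(1:ℝ) := by
      rw [show PP-2 = (PP-1)-(1:ℝ) by ring, Real.rpow_sub (by norm_num)]
    rw [e, Real.rpow_one]
    rw [div_le_iff₀ (by norm_num : (0:ℝ) < 3.6)]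
    linarith
  have hna : (0:ℝ) ≤ (3.6:ℝ)^(PP-1) := Real.rpow_nonneg (by norm_num) _
  have hnb : (0:ℝ) ≤ (3.6:ℝ)^(PP-2) := Real.rpow_nonneg (by norm_num) _
  have b1 : (RR-1)*(3.6:ℝ)^(PP-1) ≤ 0.262*2.116 :=
    mul_le_mul (by linarith) ha hna (by norm_num)
  have b2 : (RR*(PP-1))*(3.6:ℝ)^(PP-2) ≤ (1.262*0.585)*0.58778 := by
    apply mul_le_mul _ hb hnb (by positivity)
    nlinarith
  norm_num at b1 b2 ⊢
  linarith

-- N monotone on [2, 3.6]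
lemma NN_mono : MonotoneOn (fun v : ℝ => (RR-1)*v^(PP-1) + (RR*(PP-1))*v^(PP-2))
    (Icc (2:ℝ) 3.6) := by
  have hPl := PP_lb; have hPu := PP_ub; have hRl := RR_lb; have hRu := RR_ub
  have hPR := PP_mul_RR
  apply monoOn_of_hasDeriv (convex_Icc _ _)
    (f' := fun v => (RR-1)*((PP-1)*v^(PP-1-1)) + (RR*(PP-1))*((PP-2)*v^(PP-2-1)))
  · intro v hv
    have hv0 : (0:ℝ) < v := lt_of_lt_of_le (by norm_num) hv.1
    exact ((Real.hasDerivAt_rpow_const (Or.inl (ne_of_gt hv0))).const_mul (RR-1)).add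
      ((Real.hasDerivAt_rpow_const (Or.inl (ne_of_gt hv0))).const_mul (RR*(PP-1)))
  · intro v hv
    rw [interior_Icc] at hv
    have hv2 : (2:ℝ) < v := hv.1
    have hv0 : (0:ℝ) < v := by linarith
    have e : v^(PP-1-1) = v * v^(PP-2-1) := by
      conv_lhs => rw [show PP-1-1 = 1+(PP-2-1) by ring]
      rw [Real.rpow_add hv0, Real.rpow_one]
    rw [e]
    have hvp : (0:ℝ) ≤ v^(PP-2-1) := Real.rpow_nonneg hv0.le _
    have key : 0 ≤ ((RR-1)*(PP-1)*v + RR*(PP-1)*(PP-2)) := by nlinarith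
    nlinarith [mul_nonneg key hvp]

lemma part2 {x : ℝ} (hx : (0.47:ℝ) ≤ x) (hx1 : x ≤ 1) : (1+x^RR)^PP ≤ 1+x+x^2 := by
  have hPl := PP_lb; have hPu := PP_ub; have hRl := RR_lb; have hRu := RR_ub
  have hPR := PP_mul_RR
  set G : ℝ → ℝ := fun y => 1 + y + y^2 - (1+y^RR)^PP with hG
  set G1 : ℝ → ℝ := fun y => 1 + 2*y - (RR*y^(RR-1)) * PP * (1+y^RR)^(PP-1) with hG1
  set G2 : ℝ → ℝ := fun y => 2 - PP*RR*((RR-1)*y^(RR-1-1)*(1+y^RR)^(PP-1)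
      + (PP-1)*(RR*(y^(RR-1)*y^(RR-1)))*(1+y^RR)^(PP-1-1)) with hG2
  have hbase : ∀ y : ℝ, 0 < y → HasDerivAt (fun u : ℝ => 1+u^RR) (RR*y^(RR-1)) y := by
    intro y hy
    exact (Real.hasDerivAt_rpow_const (Or.inl (ne_of_gt hy))).const_add 1
  have hpos1 : ∀ y : ℝ, 0 < y → (0:ℝ) < 1 + y^RR := by
    intro y hy
    have := Real.rpow_pos_of_pos hy RR
    linarith
  have hd1 : ∀ y ∈ Icc (0.47:ℝ) 1, HasDerivAt G (G1 y) y := by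
    intro y hy
    have hy0 : (0:ℝ) < y := lt_of_lt_of_le (by norm_num) hy.1
    have hH : HasDerivAt (fun u : ℝ => (1+u^RR)^PP)
        ((RR*y^(RR-1)) * PP * (1+y^RR)^(PP-1)) y :=
      (hbase y hy0).rpow_const (Or.inl (ne_of_gt (hpos1 y hy0)))
    have hpoly : HasDerivAt (fun u : ℝ => 1 + u + u^2) (1 + 2*y) y := by
      have h2 : HasDerivAt (fun u : ℝ => u^2) (2*y) y := by simpa using hasDerivAt_pow 2 y
      exact ((hasDerivAt_id y).const_add 1).add h2
    have := hpoly.sub hH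
    exact this
  have hd2 : ∀ y ∈ Icc (0.47:ℝ) 1, HasDerivAt G1 (G2 y) y := by
    intro y hy
    have hy0 : (0:ℝ) < y := lt_of_lt_of_le (by norm_num) hy.1
    have hu : HasDerivAt (fun u : ℝ => u^(RR-1)) ((RR-1)*y^(RR-1-1)) y :=
      Real.hasDerivAt_rpow_const (Or.inl (ne_of_gt hy0))
    have hv : HasDerivAt (fun u : ℝ => (1+u^RR)^(PP-1))
        ((RR*y^(RR-1)) * (PP-1) * (1+y^RR)^(PP-1-1)) y :=
      (hbase y hy0).rpow_const (Or.inl (ne_of_gt (hpos1 y hy0)))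
    have hprod := hu.mul hv
    have h2y : HasDerivAt (fun u : ℝ => 1 + 2*u) 2 y := by
      simpa using ((hasDerivAt_id y).const_mul 2).const_add 1
    have := h2y.sub ((hprod.const_mul (RR*PP)))
    refine (this.congr_of_eventuallyEq (Filter.Eventually.of_forall fun u => ?_)).congr_deriv ?_
    · simp only [hG1, Pi.sub_apply, Pi.mul_apply]; ring
    · simp only [hG2]; ring
  -- G2 ≥ 0 on interior
  have hG2nn : ∀ y ∈ interior (Icc (0.47:ℝ) 1), 0 ≤ G2 y := by
    intro y hy
    rw [interior_Icc] at hy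
    have hy0 : (0:ℝ) < y := lt_of_lt_of_le (by norm_num) hy.1.le
    have hyRR : (0:ℝ) < y^RR := Real.rpow_pos_of_pos hy0 RR
    set v : ℝ := 1 + (y^RR)⁻¹ with hvdef
    have hv2 : (2:ℝ) ≤ v := by
      have h1 : y^RR ≤ 1 := Real.rpow_le_one hy0.le hy.2.le (by linarith)
      have h2 : (1:ℝ) ≤ (y^RR)⁻¹ := by
        rw [le_inv_comm₀ (by norm_num) hyRR]
        simpa using h1
      rw [hvdef]; linarith
    have hv36 : v ≤ 3.6 := by
      have s2 : (0.47:ℝ)^((631:ℝ)/500) ≤ (0.47:ℝ)^RR :=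
        Real.rpow_le_rpow_of_exponent_ge (by norm_num) (by norm_num) (by linarith)
      have s3 : (5:ℝ)/13 ≤ (0.47:ℝ)^((631:ℝ)/500) := by
        rw [show (0.47:ℝ) = 47/100 by norm_num]
        exact le_rpow_ratl 631 500 (by norm_num) (by norm_num) (by norm_num) (by rw [show (500:ℕ) = 2*250 from rfl, show (631:ℕ) = 1 + 3*210 from rfl, pow_mul, pow_add, pow_mul]; norm_num)
      have s1 : (0.47:ℝ)^RR ≤ y^RR := Real.rpow_le_rpow (by norm_num) hy.1.le (by linarith)
      have s4 : (5:ℝ)/13 ≤ y^RR := le_trans s3 (le_trans s2 s1)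
      have s5 : (y^RR)⁻¹ ≤ 13/5 := by
        rw [inv_le_comm₀ hyRR (by norm_num)] at *
        linarith
      rw [hvdef]; linarith
    have hv0 : (0:ℝ) < v := by linarith
    have hveq : (1:ℝ) + y^RR = y^RR * v := by
      rw [hvdef]; field_simp; ring
    simp only [hG2]
    rw [show PP-1-1 = PP-2 by ring]
    have hexp1 : (1+y^RR)^(PP-1) = y^(RR*(PP-1)) * v^(PP-1) := by
      rw [hveq, Real.mul_rpow hyRR.le hv0.le, ← Real.rpow_mul hy0.le]
    have hexp2 : (1+y^RR)^(PP-2) = y^(RR*(PP-2)) * v^(PP-2) := by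
      rw [hveq, Real.mul_rpow hyRR.le hv0.le, ← Real.rpow_mul hy0.le]
    have hA : y^(RR-1-1) * y^(RR*(PP-1)) = 1 := by
      rw [← Real.rpow_add hy0, show (RR-1-1)+(RR*(PP-1)) = 0 by linear_combination hPR,
        Real.rpow_zero]
    have hB : (y^(RR-1)*y^(RR-1)) * y^(RR*(PP-2)) = 1 := by
      rw [← Real.rpow_add hy0, ← Real.rpow_add hy0,
        show (RR-1+(RR-1))+(RR*(PP-2)) = 0 by linear_combination hPR, Real.rpow_zero]
    have hbr : (RR-1)*y^(RR-1-1)*(1+y^RR)^(PP-1)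
        + (PP-1)*(RR*(y^(RR-1)*y^(RR-1)))*(1+y^RR)^(PP-2)
        = (RR-1)*v^(PP-1) + (RR*(PP-1))*v^(PP-2) := by
      rw [hexp1, hexp2]
      linear_combination ((RR-1)*v^(PP-1))*hA + ((RR*(PP-1))*v^(PP-2))*hB
    rw [hbr]
    have hNle := NN_mono (Set.mem_Icc.mpr ⟨hv2, hv36⟩)
      (Set.mem_Icc.mpr ⟨by norm_num, le_refl _⟩) hv36
    have hNnum := NN_num
    simp only at hNle
    nlinarith [hNle, hNnum]
  have hG1mono : MonotoneOn G1 (Icc (0.47:ℝ) 1) := monoOn_of_hasDeriv (convex_Icc _ _) hd2 hG2nn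
  have hG1at1 : G1 1 = 0 := by
    simp only [hG1]
    rw [Real.one_rpow, Real.one_rpow, show ((1:ℝ)+1) = 2 by norm_num]
    have h2p : (2:ℝ)^(PP-1) = 3/2 := by
      rw [Real.rpow_sub (by norm_num), two_rpow_PP, Real.rpow_one]
    rw [h2p]
    linear_combination (-3/2)*hPR
  have hG1np : ∀ y ∈ interior (Icc (0.47:ℝ) 1), G1 y ≤ 0 := by
    intro y hy
    rw [interior_Icc] at hy
    have h := hG1mono (Set.mem_Icc.mpr ⟨hy.1.le, hy.2.le⟩)
      (Set.mem_Icc.mpr ⟨by norm_num, le_refl _⟩) hy.2.le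
    rw [hG1at1] at h
    exact h
  have hGanti : AntitoneOn G (Icc (0.47:ℝ) 1) := antiOn_of_hasDeriv (convex_Icc _ _) hd1 hG1np
  have hGat1 : G 1 = 0 := by
    simp only [hG]
    rw [Real.one_rpow, show ((1:ℝ)+1) = 2 by norm_num, two_rpow_PP]
    norm_num
  have hfin := hGanti (Set.mem_Icc.mpr ⟨hx, hx1⟩)
    (Set.mem_Icc.mpr ⟨by norm_num, le_refl _⟩) hx1
  rw [hGat1] at hfin
  simp only [hG] at hfin
  linarith

lemma lemA01 {x : ℝ} (hx0 : 0 ≤ x) (hx1 : x ≤ 1) : (1+x^RR)^PP ≤ 1+x+x^2 := by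
  rcases le_total x 0.47 with h|h
  exacts [part1 hx0 h, part2 h hx1]

-- normalized one-variable consequence, for 0 ≤ σ ≤ 1
lemma lemA_sigma {σ : ℝ} (h0 : 0 ≤ σ) (h1 : σ ≤ 1) :
    (1+σ)^PP ≤ 1 + σ^(PP/2) + σ^PP := by
  have hPl := PP_lb; have hPu := PP_ub; have hPR := PP_mul_RR
  have hRl := RR_lb
  rcases eq_or_lt_of_le h0 with heq|hσ
  · rw [← heq]
    rw [Real.zero_rpow (by linarith : PP/2 ≠ 0), Real.zero_rpow (by linarith : PP ≠ 0)]
    rw [show (1:ℝ)+0 = 1 by norm_num, Real.one_rpow]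
    norm_num
  · set x : ℝ := σ^(PP/2) with hx
    have hx0 : 0 ≤ x := Real.rpow_nonneg h0 _
    have hx1 : x ≤ 1 := Real.rpow_le_one h0 h1 (by linarith)
    have hxRR : x^RR = σ := by
      rw [hx, ← Real.rpow_mul h0, show PP/2*RR = 1 by linarith [PP_mul_RR], Real.rpow_one]
    have hx2 : x^2 = σ^PP := by
      rw [hx, sq, ← Real.rpow_add hσ]
      congr 1
      ring
    have := lemA01 hx0 hx1
    rw [hxRR, hx2] at this
    exact this

-- Lemma A' : two-variable subadditivity-type inequality
lemma lemA (s t : ℝ) (hs : 0 ≤ s) (ht : 0 ≤ t) :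
    ((s+t)^2)^(PP/2) ≤ (s^2)^(PP/2) + (s*t)^(PP/2) + (t^2)^(PP/2) := by
  have hPl := PP_lb
  have sq_rpow : ∀ a : ℝ, 0 ≤ a → (a^2)^(PP/2) = a^PP := by
    intro a ha
    rw [← Real.rpow_natCast a 2, ← Real.rpow_mul ha]
    congr 1
    ring
  rw [sq_rpow _ (by linarith : (0:ℝ) ≤ s+t), sq_rpow s hs, sq_rpow t ht]
  -- WLOG s ≤ t
  rcases le_total s t with hst|hst
  case _ =>
    rcases eq_or_lt_of_le ht with h0|htpos
    · have hs0 : s = 0 := le_antisymm (h0 ▸ hst) hs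
      rw [hs0, ← h0]
      have h1 : (0:ℝ)+0 = 0 := by norm_num
      rw [h1]
      have : (0:ℝ)^PP = 0 := Real.zero_rpow (by linarith)
      rw [this]
      positivity
    · have key : ∀ u v : ℝ, 0 ≤ u → 0 < v → u ≤ v →
          (u+v)^PP ≤ u^PP + (u*v)^(PP/2) + v^PP := by
        intro u v hu hv huv
        set σ := u/v with hσdef
        have hσ0 : 0 ≤ σ := div_nonneg hu hv.le
        have hσ1 : σ ≤ 1 := by
          rw [hσdef, div_le_one hv]; exact huv
        have hmain := lemA_sigma hσ0 hσ1
        have e1 : u + v = v * (1+σ) := by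
          rw [hσdef]; field_simp; ring
        have e2 : u * v = σ * v^2 := by
          rw [hσdef]; field_simp
        have e3 : u = σ * v := by rw [hσdef]; field_simp
        have hv2 : (0:ℝ) ≤ v^2 := sq_nonneg v
        have hvPP : (0:ℝ) < v^PP := Real.rpow_pos_of_pos hv _
        calc (u+v)^PP = v^PP * (1+σ)^PP := by
              rw [e1, Real.mul_rpow hv.le (by linarith)]
          _ ≤ v^PP * (1 + σ^(PP/2) + σ^PP) := by
              exact mul_le_mul_of_nonneg_left hmain hvPP.le
          _ = u^PP + (u*v)^(PP/2) + v^PP := by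
              have eu : u^PP = σ^PP * v^PP := by
                rw [e3, Real.mul_rpow hσ0 hv.le]
              have euv : (u*v)^(PP/2) = σ^(PP/2) * v^PP := by
                rw [e2, Real.mul_rpow hσ0 (sq_nonneg v), sq_rpow v hv.le]
              rw [eu, euv]; ring
      exact key s t hs htpos hst
  case _ =>
    rcases eq_or_lt_of_le hs with h0|hspos
    · have ht0 : t = 0 := le_antisymm (h0 ▸ hst) ht
      rw [ht0, ← h0]
      have h1 : (0:ℝ)+0 = 0 := by norm_num
      rw [h1]
      have : (0:ℝ)^PP = 0 := Real.zero_rpow (by linarith)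
      rw [this]
      positivity
    · have key : ∀ u v : ℝ, 0 ≤ u → 0 < v → u ≤ v →
          (u+v)^PP ≤ u^PP + (u*v)^(PP/2) + v^PP := by
        intro u v hu hv huv
        set σ := u/v with hσdef
        have hσ0 : 0 ≤ σ := div_nonneg hu hv.le
        have hσ1 : σ ≤ 1 := by
          rw [hσdef, div_le_one hv]; exact huv
        have hmain := lemA_sigma hσ0 hσ1
        have e1 : u + v = v * (1+σ) := by
          rw [hσdef]; field_simp; ring
        have e2 : u * v = σ * v^2 := by
          rw [hσdef]; field_simp
        have e3 : u = σ * v := by rw [hσdef]; field_simp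
        have hvPP : (0:ℝ) < v^PP := Real.rpow_pos_of_pos hv _
        calc (u+v)^PP = v^PP * (1+σ)^PP := by
              rw [e1, Real.mul_rpow hv.le (by linarith)]
          _ ≤ v^PP * (1 + σ^(PP/2) + σ^PP) := by
              exact mul_le_mul_of_nonneg_left hmain hvPP.le
          _ = u^PP + (u*v)^(PP/2) + v^PP := by
              have eu : u^PP = σ^PP * v^PP := by
                rw [e3, Real.mul_rpow hσ0 hv.le]
              have euv : (u*v)^(PP/2) = σ^(PP/2) * v^PP := by
                rw [e2, Real.mul_rpow hσ0 (sq_nonneg v), sq_rpow v hv.le]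
              rw [eu, euv]; ring
      have := key t s ht hspos hst
      rw [show t+s = s+t by ring, show t*s = s*t by ring] at this
      linarith

lemma lemB (K : ℝ) (hK : 0 ≤ K) :
    AntitoneOn (fun u : ℝ => (K+u)^(PP/2) - u^(PP/2)) (Ici (0:ℝ)) := by
  have hPl := PP_lb; have hPu := PP_ub
  have hβ0 : (0:ℝ) < PP/2 := by linarith
  have hβ1 : PP/2 < 1 := by linarith
  apply antitoneOn_of_deriv_nonpos (convex_Ici 0)
  · apply ContinuousOn.sub
    · exact ((continuous_const.add continuous_id).rpow_const
        (fun x => Or.inr hβ0.le)).continuousOn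
    · exact (continuous_id.rpow_const (fun x => Or.inr hβ0.le)).continuousOn
  · rw [interior_Ici]
    intro u hu
    have hu0 : (0:ℝ) < u := hu
    have hKu : (0:ℝ) < K + u := by linarith
    have h1 : HasDerivAt (fun w : ℝ => (K+w)^(PP/2)) (1*(PP/2)*(K+u)^(PP/2-1)) u :=
      ((hasDerivAt_id u).const_add K).rpow_const (Or.inl (ne_of_gt hKu))
    have h2 : HasDerivAt (fun w : ℝ => w^(PP/2)) ((PP/2)*u^(PP/2-1)) u :=
      Real.hasDerivAt_rpow_const (Or.inl (ne_of_gt hu0))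
    exact (h1.sub h2).differentiableAt.differentiableWithinAt
  · rw [interior_Ici]
    intro u hu
    have hu0 : (0:ℝ) < u := hu
    have hKu : (0:ℝ) < K + u := by linarith
    have h1 : HasDerivAt (fun w : ℝ => (K+w)^(PP/2)) (1*(PP/2)*(K+u)^(PP/2-1)) u :=
      ((hasDerivAt_id u).const_add K).rpow_const (Or.inl (ne_of_gt hKu))
    have h2 : HasDerivAt (fun w : ℝ => w^(PP/2)) ((PP/2)*u^(PP/2-1)) u :=
      Real.hasDerivAt_rpow_const (Or.inl (ne_of_gt hu0))
    rw [HasDerivAt.deriv (f := fun u : ℝ => (K+u)^(PP/2) - u^(PP/2)) (h1.sub h2)]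
    have hcmp : (K+u)^(PP/2-1) ≤ u^(PP/2-1) :=
      Real.rpow_le_rpow_of_nonpos hu0 (by linarith) (by linarith)
    nlinarith [hcmp]

lemma key (a b c d : ℝ) (ha : 0 ≤ a) (hb : 0 ≤ b) (hc : 0 ≤ c) (hd : 0 ≤ d)
    (hdc : d ≤ c) (habcd : a*b = c*d) :
    (a+b+(c+d))^(PP/2) ≤ a^(PP/2) + b^(PP/2) + c^(PP/2) := by
  have hPl := PP_lb; have hPu := PP_ub
  have hβ0 : (0:ℝ) < PP/2 := by linarith
  set m := Real.sqrt (a*b) with hm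
  have hm0 : (0:ℝ) ≤ m := Real.sqrt_nonneg _
  have hdm : d ≤ m := by
    have h1 : d*d ≤ a*b := by rw [habcd]; nlinarith
    have h2 : d = Real.sqrt (d*d) := (Real.sqrt_mul_self hd).symm
    rw [h2, hm]
    exact Real.sqrt_le_sqrt h1
  have hmc : m ≤ c := by
    have h1 : a*b ≤ c*c := by rw [habcd]; nlinarith
    calc m ≤ Real.sqrt (c*c) := Real.sqrt_le_sqrt h1
      _ = c := Real.sqrt_mul_self hc
  set K := a + b + m with hK
  have hK0 : (0:ℝ) ≤ K := by linarith
  have step0 : (a+b+(c+d))^(PP/2) ≤ (K+c)^(PP/2) :=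
    Real.rpow_le_rpow (by linarith) (by linarith) hβ0.le
  have stepB := lemB K hK0 (mem_Ici.mpr hm0) (mem_Ici.mpr (le_trans hm0 hmc)) hmc
  simp only at stepB
  have stepA : (K+m)^(PP/2) ≤ a^(PP/2) + m^(PP/2) + b^(PP/2) := by
    have hsq : (Real.sqrt a + Real.sqrt b)^2 = K + m := by
      rw [add_sq, Real.sq_sqrt ha, Real.sq_sqrt hb, hK, hm, Real.sqrt_mul ha b]
      ring
    have := lemA (Real.sqrt a) (Real.sqrt b) (Real.sqrt_nonneg a) (Real.sqrt_nonneg b)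
    rw [hsq, Real.sq_sqrt ha, Real.sq_sqrt hb, ← Real.sqrt_mul ha b, ← hm] at this
    exact this
  have hcβ : (0:ℝ) ≤ c^(PP/2) := Real.rpow_nonneg hc _
  linarith [step0, stepB, stepA]

theorem stmt_12 (i₁ i₂ j₁ j₂ : ℝ) (h1 : 0 ≤ i₁) (h2 : 0 ≤ i₂)
    (h3 : 0 ≤ j₁) (h4 : 0 ≤ j₂) :
    ((i₁ + i₂) * (j₁ + j₂)) ^ (Real.log 3 / Real.log 4) ≤
      (i₁ * j₁) ^ (Real.log 3 / Real.log 4) + (i₂ * j₂) ^ (Real.log 3 / Real.log 4) +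
        max ((i₁ * j₂) ^ (Real.log 3 / Real.log 4))
          ((i₂ * j₁) ^ (Real.log 3 / Real.log 4)) := by
  rw [beta_eq_PP]
  rcases le_total (i₂*j₁) (i₁*j₂) with h|h
  · have hk := key (i₁*j₁) (i₂*j₂) (i₁*j₂) (i₂*j₁) (mul_nonneg h1 h3) (mul_nonneg h2 h4)
      (mul_nonneg h1 h4) (mul_nonneg h2 h3) h (by ring)
    have he : (i₁+i₂)*(j₁+j₂) = i₁*j₁ + i₂*j₂ + (i₁*j₂ + i₂*j₁) := by ring
    rw [he]
    have hmax := le_max_left ((i₁*j₂)^(PP/2)) ((i₂*j₁)^(PP/2))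
    linarith
  · have hk := key (i₁*j₁) (i₂*j₂) (i₂*j₁) (i₁*j₂) (mul_nonneg h1 h3) (mul_nonneg h2 h4)
      (mul_nonneg h2 h3) (mul_nonneg h1 h4) h (by ring)
    have he : (i₁+i₂)*(j₁+j₂) = i₁*j₁ + i₂*j₂ + (i₂*j₁ + i₁*j₂) := by ring
    rw [he]
    have hmax := le_max_right ((i₁*j₂)^(PP/2)) ((i₂*j₁)^(PP/2))
    linarith
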